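/- Define the simplicial complex Δ[n] on vertex set {1,...,n} whose m-simplices are the sets {i₁ < i₂ < ... < i_{m+1}} with i_{j+1} − i_j ≥ 2 for all j. Then Δ[3k+1] is contractible for every natural number k. -/

import Mathlib

/-- `s` is a face of the simplicial complex `Δ[n]`: a subset of `{1,…,n}` in which
any two distinct elements differ by at least 2. -/
def IsDeltaFace (n : ℕ) (s : Set ℕ) : Prop :=
  s ⊆ Set.Icc 1 n ∧ ∀ i ∈ s, ∀ j ∈ s, i ≠ j → i + 2 ≤ j ∨ j + 2 ≤ i

/-- The geometric realization of `Δ[n]`: convex combinations of vertices supported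
on a face. -/
abbrev DeltaRealization (n : ℕ) : Type :=
  {x : ℕ → ℝ // (∀ i, 0 ≤ x i) ∧ IsDeltaFace n (Function.support x) ∧
    ∑ i ∈ Finset.Icc 1 n, x i = 1}

namespace DeltaAux

lemma face_mono {n : ℕ} {s t : Set ℕ} (h : IsDeltaFace n t) (hst : s ⊆ t) :
    IsDeltaFace n s :=
  ⟨hst.trans h.1, fun i hi j hj => h.2 i (hst hi) j (hst hj)⟩

noncomputable def e1 : ℕ → ℝ := fun i => if i = 1 then 1 else 0

lemma e1_sum (n : ℕ) (hn : 1 ≤ n) : ∑ i ∈ Finset.Icc 1 n, e1 i = 1 := by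
  unfold e1
  rw [Finset.sum_ite_eq' (Finset.Icc 1 n) 1 (fun _ => (1:ℝ))]
  simp [Finset.mem_Icc, hn]

lemma e1_nonneg (i : ℕ) : 0 ≤ e1 i := by
  unfold e1; split_ifs <;> norm_num

lemma e1_support : Function.support e1 = {1} := by
  ext i
  simp only [Function.mem_support, e1, Set.mem_singleton_iff]
  split_ifs with h <;> simp [h]

noncomputable def pt (k : ℕ) : DeltaRealization (3 * k + 1) :=
  ⟨e1, e1_nonneg, by
    rw [e1_support]
    constructor
    · intro i hi
      simp only [Set.mem_singleton_iff] at hi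
      subst hi
      simp [Set.mem_Icc]
    · intro i hi j hj hij
      simp only [Set.mem_singleton_iff] at hi hj
      omega,
   e1_sum _ (by omega)⟩

/-- Subspaces: points whose coordinates at `3*m+2` vanish for `j ≤ m < k`. -/
def A (k j : ℕ) : Set (DeltaRealization (3 * k + 1)) :=
  {x | ∀ m, j ≤ m → m < k → x.1 (3 * m + 2) = 0}

noncomputable def pt0 (k : ℕ) : ↥(A k 0) :=
  ⟨pt k, by
    intro m _ _
    show e1 (3 * m + 2) = 0
    unfold e1
    rw [if_neg (by omega)]⟩

/-- Base case: on `A k 0` (all "2 mod 3" coordinates vanish), straight-line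
contraction to the vertex `1` stays inside the space. -/
lemma base_mem (k : ℕ) (t : ℝ) (ht0 : 0 ≤ t) (ht1 : t ≤ 1)
    (x : DeltaRealization (3 * k + 1)) (hx : ∀ m, m < k → x.1 (3 * m + 2) = 0) :
    ((∀ i, 0 ≤ (1 - t) * x.1 i + t * e1 i) ∧
      IsDeltaFace (3 * k + 1) (Function.support (fun i => (1 - t) * x.1 i + t * e1 i)) ∧
      ∑ i ∈ Finset.Icc 1 (3 * k + 1), ((1 - t) * x.1 i + t * e1 i) = 1) := by
  obtain ⟨hx0, ⟨hIcc, hpair⟩, hsum⟩ := x.2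
  refine ⟨?_, ?_, ?_⟩
  · intro i
    exact add_nonneg (mul_nonneg (by linarith) (hx0 i)) (mul_nonneg ht0 (e1_nonneg i))
  · have hsub : Function.support (fun i => (1 - t) * x.1 i + t * e1 i) ⊆
        Function.support x.1 ∪ {1} := by
      intro i hi
      rcases eq_or_ne i 1 with h | h
      · right; simp [h]
      · left
        simp only [Function.mem_support] at hi ⊢
        intro h0
        apply hi
        simp [e1, h, h0]
    refine face_mono ⟨?_, ?_⟩ hsub
    · rintro i (hi | hi)
      · exact hIcc hi
      · simp only [Set.mem_singleton_iff] at hi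
        subst hi
        simp [Set.mem_Icc]
    · have key : ∀ a ∈ Function.support x.1, a ≠ 1 → 1 + 2 ≤ a := by
        intro a ha hane
        have h1 := hIcc ha
        simp only [Set.mem_Icc] at h1
        have h2 : a ≠ 2 := by
          intro h2
          rcases Nat.eq_zero_or_pos k with hk | hk
          · omega
          · have h3 := hx 0 hk
            apply ha
            rw [h2]
            simpa using h3
        omega
      rintro i (hi | hi) i' (hi' | hi') hne
      · exact hpair i hi i' hi' hne
      · simp only [Set.mem_singleton_iff] at hi'
        subst hi'
        right; exact key i hi hne
      · simp only [Set.mem_singleton_iff] at hi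
        subst hi
        left; exact key i' hi' (Ne.symm hne)
      · simp only [Set.mem_singleton_iff] at hi hi'
        omega
  · rw [Finset.sum_add_distrib, ← Finset.mul_sum, ← Finset.mul_sum, hsum,
      e1_sum _ (by omega)]
    ring

noncomputable def baseHomotopy (k : ℕ) :
    (ContinuousMap.id ↥(A k 0)).Homotopy (ContinuousMap.const _ (pt0 k)) where
  toFun := fun p =>
    ⟨⟨fun i => (1 - (p.1 : ℝ)) * p.2.1.1 i + (p.1 : ℝ) * e1 i,
      base_mem k p.1 p.1.2.1 p.1.2.2 p.2.1 (fun m hm => p.2.2 m (Nat.zero_le m) hm)⟩,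
      by
        intro m _ hm
        show (1 - (p.1 : ℝ)) * p.2.1.1 (3 * m + 2) + (p.1 : ℝ) * e1 (3 * m + 2) = 0
        rw [p.2.2 m (Nat.zero_le m) hm]
        unfold e1
        rw [if_neg (by omega)]
        ring⟩
  continuous_toFun := by
    refine Continuous.subtype_mk (Continuous.subtype_mk ?_ _) _
    refine continuous_pi fun i => ?_
    have ht : Continuous fun p : unitInterval × ↥(A k 0) => (p.1 : ℝ) :=
      continuous_subtype_val.comp continuous_fst
    have hxc : Continuous fun p : unitInterval × ↥(A k 0) => p.2.1.1 i :=
      (continuous_apply i).comp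
        (continuous_subtype_val.comp (continuous_subtype_val.comp continuous_snd))
    exact ((continuous_const.sub ht).mul hxc).add (ht.mul continuous_const)
  map_zero_left := fun x => by
    refine Subtype.ext (Subtype.ext (funext fun i => ?_))
    show (1 - ((0 : unitInterval) : ℝ)) * x.1.1 i + ((0 : unitInterval) : ℝ) * e1 i = x.1.1 i
    norm_num
  map_one_left := fun x => by
    refine Subtype.ext (Subtype.ext (funext fun i => ?_))
    show (1 - ((1 : unitInterval) : ℝ)) * x.1.1 i + ((1 : unitInterval) : ℝ) * e1 i = e1 i
    norm_num

lemma base_contractible (k : ℕ) : ContractibleSpace ↥(A k 0) := by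
  rw [contractible_iff_id_nullhomotopic]
  exact ⟨pt0 k, ⟨baseHomotopy k⟩⟩

/-- The elementary move at stage `j`: transfer the mass at vertex `3j+2`
to vertex `3j+4`, with time parameter `t`. -/
noncomputable def mv (j : ℕ) (t : ℝ) (x : ℕ → ℝ) : ℕ → ℝ := fun i =>
  if i = 3 * j + 2 then (1 - t) * x i
  else if i = 3 * j + 4 then x i + t * x (3 * j + 2)
  else x i

lemma mv_zero (j : ℕ) (x : ℕ → ℝ) : mv j 0 x = x := by
  funext i
  unfold mv
  split_ifs with h1 h2 <;> simp

lemma mv_one_zero (j : ℕ) (x : ℕ → ℝ) : mv j 1 x (3 * j + 2) = 0 := by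
  unfold mv
  simp

lemma mv_mem (k j : ℕ) (hjk : j < k) (t : ℝ) (ht0 : 0 ≤ t) (ht1 : t ≤ 1)
    (x : DeltaRealization (3 * k + 1)) (hx : ∀ m, j + 1 ≤ m → m < k → x.1 (3 * m + 2) = 0) :
    ((∀ i, 0 ≤ mv j t x.1 i) ∧ IsDeltaFace (3 * k + 1) (Function.support (mv j t x.1)) ∧
      ∑ i ∈ Finset.Icc 1 (3 * k + 1), mv j t x.1 i = 1) ∧
    (∀ m, j + 1 ≤ m → m < k → mv j t x.1 (3 * m + 2) = 0) := by
  obtain ⟨hx0, ⟨hIcc, hpair⟩, hsum⟩ := x.2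
  refine ⟨⟨?_, ?_, ?_⟩, ?_⟩
  · intro i
    unfold mv
    split_ifs with h1 h2
    · exact mul_nonneg (by linarith) (hx0 i)
    · exact add_nonneg (hx0 i) (mul_nonneg ht0 (hx0 _))
    · exact hx0 i
  · by_cases hz : x.1 (3 * j + 2) = 0
    · have heq : mv j t x.1 = x.1 := by
        funext i
        unfold mv
        split_ifs with h1 h2
        · rw [h1, hz]; ring
        · rw [hz]; ring
        · rfl
      rw [heq]
      exact ⟨hIcc, hpair⟩
    · have hsub : Function.support (mv j t x.1) ⊆ Function.support x.1 ∪ {3 * j + 4} := by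
        intro i hi
        simp only [Function.mem_support, mv] at hi
        split_ifs at hi with h1 h2
        · left
          simp only [Function.mem_support]
          intro h0
          exact hi (by rw [h0, mul_zero])
        · right; simp [h2]
        · left; exact hi
      have h2mem : (3 * j + 2) ∈ Function.support x.1 := hz
      have hnot5 : (3 * j + 5) ∉ Function.support x.1 := by
        intro h5
        rcases lt_or_ge (j + 1) k with h | h
        · have h6 := hx (j + 1) le_rfl h
          apply h5
          convert h6 using 2 <;> omega
        · have h7 := hIcc h5
          simp only [Set.mem_Icc] at h7
          omega
      refine face_mono ⟨?_, ?_⟩ hsub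
      · rintro i (hi | hi)
        · exact hIcc hi
        · simp only [Set.mem_singleton_iff] at hi
          subst hi
          simp only [Set.mem_Icc]
          omega
      · have key : ∀ a ∈ Function.support x.1, a ≠ 3 * j + 4 →
            a + 2 ≤ 3 * j + 4 ∨ 3 * j + 4 + 2 ≤ a := by
          intro a ha hne
          have h1 := hIcc ha
          simp only [Set.mem_Icc] at h1
          have h3 : a ≠ 3 * j + 5 := fun h => hnot5 (h ▸ ha)
          rcases eq_or_ne a (3 * j + 2) with h4 | h4
          · omega
          · have h5 := hpair a ha (3 * j + 2) h2mem h4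
            omega
        rintro i (hi | hi) i' (hi' | hi') hne
        · exact hpair i hi i' hi' hne
        · simp only [Set.mem_singleton_iff] at hi'
          subst hi'
          exact key i hi hne
        · simp only [Set.mem_singleton_iff] at hi
          subst hi
          have := key i' hi' (Ne.symm hne)
          omega
        · simp only [Set.mem_singleton_iff] at hi hi'
          omega
  · have hterm : ∀ i ∈ Finset.Icc 1 (3 * k + 1), mv j t x.1 i =
        x.1 i + ((if i = 3 * j + 4 then t * x.1 (3 * j + 2) else 0)
          - (if i = 3 * j + 2 then t * x.1 (3 * j + 2) else 0)) := by
      intro i _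
      unfold mv
      rcases eq_or_ne i (3 * j + 2) with h | h
      · rw [if_pos h, if_pos h, if_neg (by omega : i ≠ 3 * j + 4)]
        subst h
        ring
      · rw [if_neg h, if_neg h]
        rcases eq_or_ne i (3 * j + 4) with h' | h'
        · rw [if_pos h', if_pos h']
          ring
        · rw [if_neg h', if_neg h']
          ring
    rw [Finset.sum_congr rfl hterm, Finset.sum_add_distrib, Finset.sum_sub_distrib,
      Finset.sum_ite_eq' (Finset.Icc 1 (3 * k + 1)) (3 * j + 4) (fun _ => t * x.1 (3 * j + 2)),
      Finset.sum_ite_eq' (Finset.Icc 1 (3 * k + 1)) (3 * j + 2) (fun _ => t * x.1 (3 * j + 2)),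
      if_pos (by simp only [Finset.mem_Icc]; omega),
      if_pos (by simp only [Finset.mem_Icc]; omega), hsum]
    ring
  · intro m hm1 hm2
    unfold mv
    rw [if_neg (by omega), if_neg (by omega)]
    exact hx m hm1 hm2

lemma A_sub (k j : ℕ) : A k j ⊆ A k (j + 1) :=
  fun x hxx m hm1 hm2 => hxx m (by omega) hm2

noncomputable def retr (k j : ℕ) (hjk : j < k) : C(↥(A k (j + 1)), ↥(A k j)) where
  toFun := fun x =>
    ⟨⟨mv j 1 x.1.1, (mv_mem k j hjk 1 zero_le_one le_rfl x.1 x.2).1⟩,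
      by
        intro m hm1 hm2
        rcases eq_or_lt_of_le hm1 with h | h
        · show mv j 1 x.1.1 (3 * m + 2) = 0
          rw [← h]
          exact mv_one_zero j x.1.1
        · exact (mv_mem k j hjk 1 zero_le_one le_rfl x.1 x.2).2 m h hm2⟩
  continuous_toFun := by
    refine Continuous.subtype_mk (Continuous.subtype_mk ?_ _) _
    refine continuous_pi fun i => ?_
    unfold mv
    have hxc : ∀ l, Continuous fun x : ↥(A k (j + 1)) => x.1.1 l := fun l =>
      (continuous_apply l).comp (continuous_subtype_val.comp continuous_subtype_val)
    split_ifs with h1 h2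
    · exact continuous_const.mul (hxc i)
    · exact (hxc i).add (continuous_const.mul (hxc _))
    · exact hxc i

noncomputable def incl (k j : ℕ) : C(↥(A k j), ↥(A k (j + 1))) :=
  ⟨Set.inclusion (A_sub k j), continuous_inclusion (A_sub k j)⟩

noncomputable def moveHomotopy (k j : ℕ) (hjk : j < k) :
    (ContinuousMap.id ↥(A k (j + 1))).Homotopy ((incl k j).comp (retr k j hjk)) where
  toFun := fun p =>
    ⟨⟨mv j (p.1 : ℝ) p.2.1.1,
      (mv_mem k j hjk (p.1 : ℝ) p.1.2.1 p.1.2.2 p.2.1 p.2.2).1⟩,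
      fun m hm1 hm2 => (mv_mem k j hjk (p.1 : ℝ) p.1.2.1 p.1.2.2 p.2.1 p.2.2).2 m hm1 hm2⟩
  continuous_toFun := by
    refine Continuous.subtype_mk (Continuous.subtype_mk ?_ _) _
    refine continuous_pi fun i => ?_
    unfold mv
    have ht : Continuous fun p : unitInterval × ↥(A k (j + 1)) => (p.1 : ℝ) :=
      continuous_subtype_val.comp continuous_fst
    have hxc : ∀ l, Continuous fun p : unitInterval × ↥(A k (j + 1)) => p.2.1.1 l := fun l =>
      (continuous_apply l).comp
        (continuous_subtype_val.comp (continuous_subtype_val.comp continuous_snd))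
    split_ifs with h1 h2
    · exact (continuous_const.sub ht).mul (hxc i)
    · exact (hxc i).add (ht.mul (hxc _))
    · exact hxc i
  map_zero_left := fun x => by
    refine Subtype.ext (Subtype.ext ?_)
    show mv j ((0 : unitInterval) : ℝ) x.1.1 = x.1.1
    rw [show ((0 : unitInterval) : ℝ) = 0 from rfl, mv_zero]
  map_one_left := fun x => rfl

lemma step (k j : ℕ) (hc : ContractibleSpace ↥(A k j)) :
    ContractibleSpace ↥(A k (j + 1)) := by
  rcases lt_or_ge j k with hjk | hkj
  · rw [contractible_iff_id_nullhomotopic] at hc ⊢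
    obtain ⟨c, hcH⟩ := hc
    have h1 : (ContinuousMap.id ↥(A k (j + 1))).Homotopic
        ((incl k j).comp (retr k j hjk)) := ⟨moveHomotopy k j hjk⟩
    have h3 : ((incl k j).comp (ContinuousMap.id _)).Homotopic
        ((incl k j).comp (ContinuousMap.const _ c)) :=
      ContinuousMap.Homotopic.comp (ContinuousMap.Homotopic.refl (incl k j)) hcH
    have h4 := ContinuousMap.Homotopic.comp
      h3 (ContinuousMap.Homotopic.refl (retr k j hjk))
    simp only [ContinuousMap.comp_id, ContinuousMap.comp_const,
      ContinuousMap.const_comp] at h4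
    exact ⟨(incl k j) c, h1.trans h4⟩
  · have hAeq : A k (j + 1) = A k j := by
      ext x
      simp only [A, Set.mem_setOf_eq]
      constructor <;> intro h m h1 h2 <;> exact absurd h2 (by omega)
    rw [hAeq]
    exact hc

end DeltaAux

/-- `Δ[3k+1]` is contractible for every natural number `k`. -/
theorem stmt_4 : ∀ k : ℕ, ContractibleSpace (DeltaRealization (3 * k + 1)) := by
  intro k
  have h : ∀ j, ContractibleSpace ↥(DeltaAux.A k j) := by
    intro j
    induction j with
    | zero => exact DeltaAux.base_contractible k
    | succ j ih => exact DeltaAux.step k j ih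
  have hk := h k
  have huniv : DeltaAux.A k k = Set.univ := by
    ext x
    simp only [DeltaAux.A, Set.mem_setOf_eq, Set.mem_univ, iff_true]
    intro m h1 h2
    exact absurd h2 (by omega)
  rw [huniv] at hk
  exact (Homeomorph.Set.univ (DeltaRealization (3 * k + 1))).symm.contractibleSpace
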